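/- Let ρ be a 2×2 Hermitian positive semidefinite matrix with diagonal entries p_k = p_{kk'} + p_{k\bar{k}'} and p_{k'} = p_{kk'} + p_{\bar{k}k'}, where p_{kk'}, p_{k\bar{k}'}, p_{\bar{k}k'} ≥ 0, and off-diagonal entry z with |z|² ≤ p_{\bar{k}k'}·p_{k\bar{k}'}. Then the smallest eigenvalue of ρ satisfies λ_- ≥ p_{kk'}. -/

import Mathlib

/-- The smallest eigenvalue λ₋ = (p_k+p_{k'})/2 − sqrt((p_k−p_{k'})²/4+|z|²) of the
2×2 Hermitian PSD matrix [[p_k, z̄],[z, p_{k'}]] with p_k = p_{kk'} + p_{k k̄'},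
p_{k'} = p_{kk'} + p_{k̄ k'} and |z|² ≤ p_{k̄k'}·p_{kk̄'} satisfies λ₋ ≥ p_{kk'}. -/
theorem smallest_eigenvalue_ge (c a b : ℝ) (z : ℂ)
    (hc : 0 ≤ c) (ha : 0 ≤ a) (hb : 0 ≤ b)
    (hz : ‖z‖ ^ 2 ≤ b * a) :
    c ≤ ((c + a) + (c + b)) / 2 -
        Real.sqrt (((c + a) - (c + b)) ^ 2 / 4 + ‖z‖ ^ 2) := by
  have h1 : ((c + a) - (c + b)) ^ 2 / 4 + ‖z‖ ^ 2 ≤ ((a + b) / 2) ^ 2 := by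
    nlinarith
  have h2 : Real.sqrt (((c + a) - (c + b)) ^ 2 / 4 + ‖z‖ ^ 2) ≤ (a + b) / 2 := by
    calc Real.sqrt (((c + a) - (c + b)) ^ 2 / 4 + ‖z‖ ^ 2)
        ≤ Real.sqrt (((a + b) / 2) ^ 2) := Real.sqrt_le_sqrt h1
      _ = (a + b) / 2 := Real.sqrt_sq (by linarith)
  linarith
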